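/- Suppose that in ℂ the characteristic polynomial factors as X^k − c₁X^{k−1} − c₂X^{k−2} − ⋯ − c_k = ∏_{i=1}^{k} (X − α_i) with α₁,…,α_k ∈ ℂ. Then for every n ≥ 0, p_{n+k−1} = Σ_{(i₁,…,i_k)∈ℕ^k, i₁+i₂+⋯+i_k = n} α₁^{i₁}α₂^{i₂}⋯α_k^{i_k}. -/

import Mathlib

open Polynomial

lemma geo_aux (a : ℂ) :
    (1 - PowerSeries.C a * PowerSeries.X) * PowerSeries.mk (fun m => a ^ m) = 1 := by
  ext n
  cases n with
  | zero => simp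
  | succ n =>
    rw [sub_mul, one_mul, mul_assoc, map_sub, PowerSeries.coeff_C_mul,
      PowerSeries.coeff_succ_X_mul, PowerSeries.coeff_mk, PowerSeries.coeff_mk,
      PowerSeries.coeff_one]
    simp [pow_succ, mul_comm]

lemma reflect_sum_aux {ι : Type*} (s : Finset ι) (f : ι → ℂ[X]) (N : ℕ) :
    Polynomial.reflect N (∑ i ∈ s, f i) = ∑ i ∈ s, Polynomial.reflect N (f i) := by
  classical
  induction s using Finset.induction with
  | empty => simp [reflect_zero]
  | @insert a s h ih => rw [Finset.sum_insert h, Finset.sum_insert h, reflect_add, ih]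

lemma reflect_prod_aux {ι : Type*} [DecidableEq ι] (s : Finset ι) (α : ι → ℂ) :
    Polynomial.reflect s.card (∏ j ∈ s, ((X : ℂ[X]) - C (α j))) =
      ∏ j ∈ s, (1 - C (α j) * X) := by
  induction s using Finset.induction with
  | empty => simp [reflect_one]
  | @insert a s h ih =>
    rw [Finset.prod_insert h, Finset.prod_insert h, Finset.card_insert_of_notMem h,
      show s.card + 1 = 1 + s.card from by omega,
      reflect_mul (X - C (α a)) _ (by
        simpa using natDegree_X_sub_C_le (α a)) (by
        refine (natDegree_prod_le _ _).trans ?_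
        have : ∑ j ∈ s, ((X : ℂ[X]) - C (α j)).natDegree ≤ ∑ j ∈ s, 1 :=
          Finset.sum_le_sum fun j _ => by simpa using natDegree_X_sub_C_le (α j)
        simpa using this),
      ih, reflect_sub, reflect_one_X, reflect_C, pow_one]

/-- If the characteristic polynomial
`X^k - c₁X^{k-1} - ⋯ - c_k` factors over `ℂ` as `∏_{i=1}^k (X - α_i)`, then for every
`n ≥ 0`, `p_{n+k-1} = ∑_{i₁+i₂+⋯+i_k = n} α₁^{i₁}α₂^{i₂}⋯α_k^{i_k}`. -/
theorem seq_eq_complete_homogeneous_sum (k : ℕ) (hk : 1 ≤ k) (c : ℕ → ℂ) (p : ℕ → ℂ)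
    (hinit : ∀ i < k, p i = if i = k - 1 then 1 else 0)
    (hrec : ∀ n, p (n + k) = ∑ i ∈ Finset.range k, c (i + 1) * p (n + k - (i + 1)))
    (α : Fin k → ℂ)
    (hfac : (X : ℂ[X]) ^ k - ∑ i ∈ Finset.range k, C (c (i + 1)) * X ^ (k - (i + 1)) =
      ∏ j : Fin k, (X - C (α j)))
    (n : ℕ) :
    p (n + k - 1) =
      ∑ i ∈ (Fintype.piFinset fun _ : Fin k => Finset.range (n + 1)).filter
          (fun i => ∑ j : Fin k, i j = n),
        ∏ j : Fin k, α j ^ i j := by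
  classical
  set F : PowerSeries ℂ := ∏ j : Fin k, PowerSeries.mk fun m => (α j) ^ m with hF
  set S : PowerSeries ℂ := ∑ i ∈ Finset.range k,
    PowerSeries.C (c (i + 1)) * PowerSeries.X ^ (i + 1) with hS
  -- reflect hfac
  have hrefl : (∏ j : Fin k, ((1 : ℂ[X]) - C (α j) * X)) =
      1 - ∑ i ∈ Finset.range k, C (c (i + 1)) * X ^ (i + 1) := by
    have h1 : Polynomial.reflect k (∏ j : Fin k, ((X : ℂ[X]) - C (α j))) =
        ∏ j : Fin k, ((1 : ℂ[X]) - C (α j) * X) := by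
      have := reflect_prod_aux (Finset.univ : Finset (Fin k)) α
      simpa using this
    rw [← h1, ← hfac, reflect_sub, reflect_sum_aux]
    congr 1
    · simpa using (reflect_monomial k k (R := ℂ))
    · refine Finset.sum_congr rfl fun i hi => ?_
      have hik := Finset.mem_range.mp hi
      rw [reflect_C_mul_X_pow, revAt_le (Nat.sub_le _ _),
        show k - (k - (i + 1)) = i + 1 from by omega]
  -- the key power series identity
  have hps : (1 - S) * F = 1 := by
    have hPS : (∏ j : Fin k, (1 - PowerSeries.C (α j) * PowerSeries.X)) = 1 - S := by
      have h3 := congrArg (Polynomial.coeToPowerSeries.ringHom (R := ℂ)) hrefl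
      simp only [map_prod, map_sub, map_one, map_sum, map_mul, map_pow,
        Polynomial.coeToPowerSeries.ringHom_apply, Polynomial.coe_C, Polynomial.coe_X] at h3
      rw [hS]
      exact h3
    rw [← hPS, hF, ← Finset.prod_mul_distrib]
    exact Finset.prod_eq_one fun j _ => geo_aux (α j)
  have hF1 : F = 1 + S * F := by
    linear_combination hps
  -- coefficient recurrence
  have hcrec : ∀ m, 1 ≤ m → PowerSeries.coeff m F =
      ∑ i ∈ Finset.range k, c (i + 1) *
        (if i + 1 ≤ m then PowerSeries.coeff (m - (i + 1)) F else 0) := by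
    intro m hm
    conv_lhs => rw [hF1]
    rw [map_add, PowerSeries.coeff_one, if_neg (by omega), zero_add, hS, Finset.sum_mul,
      map_sum]
    refine Finset.sum_congr rfl fun i _ => ?_
    rw [mul_assoc, PowerSeries.coeff_C_mul, PowerSeries.coeff_X_pow_mul']
  -- main induction
  have hmain : ∀ m, p (m + k - 1) = PowerSeries.coeff m F := by
    intro m
    induction m using Nat.strong_induction_on with
    | _ m ih =>
      match m with
      | 0 =>
        rw [show 0 + k - 1 = k - 1 from by omega, hinit (k - 1) (by omega), if_pos rfl, hF]
        rw [PowerSeries.coeff_zero_eq_constantCoeff, map_prod]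
        simp [PowerSeries.constantCoeff_mk]
      | m + 1 =>
        rw [show m + 1 + k - 1 = m + k from by omega, hrec m, hcrec (m + 1) (by omega)]
        refine Finset.sum_congr rfl fun i hi => ?_
        have hik : i < k := Finset.mem_range.mp hi
        congr 1
        by_cases him : i ≤ m
        · rw [if_pos (by omega), show m + k - (i + 1) = (m - i) + k - 1 from by omega,
            ih (m - i) (by omega), show m + 1 - (i + 1) = m - i from by omega]
        · rw [if_neg (by omega), hinit (m + k - (i + 1)) (by omega), if_neg (by omega)]
  -- identify coefficient with the combinatorial sum
  rw [hmain n, hF, PowerSeries.coeff_prod]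
  refine Finset.sum_nbij' (fun l => (l : Fin k → ℕ))
    (fun f => Finsupp.equivFunOnFinite.symm f) ?_ ?_ ?_ ?_ ?_
  · intro l hl
    rw [Finset.mem_finsuppAntidiag] at hl
    rw [Finset.mem_filter]
    constructor
    · rw [Fintype.mem_piFinset]
      intro j
      rw [Finset.mem_range]
      have h4 : l j ≤ ∑ j' : Fin k, l j' := Finset.single_le_sum (fun _ _ => Nat.zero_le _)
        (Finset.mem_univ j)
      have h5 : ∑ j' : Fin k, l j' = n := hl.1
      show l j < n + 1
      omega
    · simpa using hl.1
  · intro f hf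
    rw [Finset.mem_filter] at hf
    rw [Finset.mem_finsuppAntidiag]
    exact ⟨by simpa using hf.2, Finset.subset_univ _⟩
  · intro l _; exact Finsupp.equivFunOnFinite.symm_apply_apply l
  · intro f _; exact Finsupp.equivFunOnFinite.apply_symm_apply f
  · intro l _
    exact Finset.prod_congr rfl fun j _ => by rw [PowerSeries.coeff_mk]
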